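/- If a semigroup X is projectively TzS-closed, then the poset X/⇕ (the semilattice reflection of X) and the poset VE(X) of viable idempotents are chain-finite (every infinite subset contains two ≤-incomparable elements). -/

import Mathlib

universe u

open Set TopologicalSpace

/-- A topological space is zero-dimensional: it has a base of clopen sets. -/
def HasClopenBasis (Y : Type*) [TopologicalSpace Y] : Prop :=
  ∃ B : Set (Set Y), (∀ s ∈ B, IsClopen s) ∧ IsTopologicalBasis B

section TopClasses

variable (X : Type u) [Semigroup X]

/-- `X` is absolutely `T₁S`-closed: the image of every homomorphism to a `T₁`
topological semigroup is closed. -/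
def AbsolutelyT1SClosed : Prop :=
  ∀ (Y : Type u) [Semigroup Y] [TopologicalSpace Y] [ContinuousMul Y] [T1Space Y]
    (h : X →ₙ* Y), IsClosed (Set.range h)

/-- `X` is absolutely `T₂S`-closed. -/
def AbsolutelyT2SClosed : Prop :=
  ∀ (Y : Type u) [Semigroup Y] [TopologicalSpace Y] [ContinuousMul Y] [T2Space Y]
    (h : X →ₙ* Y), IsClosed (Set.range h)

/-- `X` is absolutely `TzS`-closed. -/
def AbsolutelyTzSClosed : Prop :=
  ∀ (Y : Type u) [Semigroup Y] [TopologicalSpace Y] [ContinuousMul Y] [T1Space Y],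
    HasClopenBasis Y → ∀ (h : X →ₙ* Y), IsClosed (Set.range h)

/-- `X` is `T₁S`-closed: the image of every injective homomorphism to a `T₁`
topological semigroup with discrete image is closed. -/
def T1SClosed : Prop :=
  ∀ (Y : Type u) [Semigroup Y] [TopologicalSpace Y] [ContinuousMul Y] [T1Space Y]
    (h : X →ₙ* Y), Function.Injective h → DiscreteTopology (Set.range h) →
      IsClosed (Set.range h)

/-- `X` is `T₂S`-closed. -/
def T2SClosed : Prop :=
  ∀ (Y : Type u) [Semigroup Y] [TopologicalSpace Y] [ContinuousMul Y] [T2Space Y]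
    (h : X →ₙ* Y), Function.Injective h → DiscreteTopology (Set.range h) →
      IsClosed (Set.range h)

/-- `X` is `TzS`-closed. -/
def TzSClosed : Prop :=
  ∀ (Y : Type u) [Semigroup Y] [TopologicalSpace Y] [ContinuousMul Y] [T1Space Y],
    HasClopenBasis Y → ∀ (h : X →ₙ* Y), Function.Injective h →
      DiscreteTopology (Set.range h) → IsClosed (Set.range h)

/-- `X` is injectively `T₂S`-closed. -/
def InjectivelyT2SClosed : Prop :=
  ∀ (Y : Type u) [Semigroup Y] [TopologicalSpace Y] [ContinuousMul Y] [T2Space Y]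
    (h : X →ₙ* Y), Function.Injective h → IsClosed (Set.range h)

/-- `X` is projectively `T₁S`-closed: all congruence quotients are `T₁S`-closed. -/
def ProjectivelyT1SClosed : Prop := ∀ c : Con X, T1SClosed c.Quotient

/-- `X` is projectively `TzS`-closed. -/
def ProjectivelyTzSClosed : Prop := ∀ c : Con X, TzSClosed c.Quotient

/-- `X` is projectively `T₁S`-discrete: every homomorphism into a `T₁`
topological semigroup has discrete image. -/
def ProjectivelyT1SDiscrete : Prop :=
  ∀ (Y : Type u) [Semigroup Y] [TopologicalSpace Y] [ContinuousMul Y] [T1Space Y]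
    (h : X →ₙ* Y), DiscreteTopology (Set.range h)

/-- `X` is projectively `TzS`-discrete. -/
def ProjectivelyTzSDiscrete : Prop :=
  ∀ (Y : Type u) [Semigroup Y] [TopologicalSpace Y] [ContinuousMul Y] [T1Space Y],
    HasClopenBasis Y → ∀ (h : X →ₙ* Y), DiscreteTopology (Set.range h)

end TopClasses

/-- `spow x n` is the power `x^(n+1)` in a semigroup; thus as `n` ranges over `ℕ`,
`spow x n` ranges over all powers `x^m`, `m ≥ 1`. -/
def spow {X : Type*} [Semigroup X] (x : X) : ℕ → X
  | 0 => x
  | n + 1 => spow x n * x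

section AlgDefs

variable (X : Type*) [Semigroup X]

/-- the set `E(X)` of idempotents. -/
def idemSet : Set X := {x | x * x = x}

/-- `H_e`, the maximal subgroup containing the idempotent `e`. -/
def maxSubgroup (e : X) : Set X :=
  {x | x * e = x ∧ e * x = x ∧ ∃ y, y * e = y ∧ e * y = y ∧ x * y = e ∧ y * x = e}

/-- The Clifford part `H(X) = ⋃_{e ∈ E(X)} H_e`. -/
def cliffordPart : Set X := ⋃ e ∈ idemSet X, maxSubgroup X e

/-- `H_e/e := {x : xe = ex ∈ H_e}`. -/
def HeCoideal (e : X) : Set X := {x | x * e = e * x ∧ x * e ∈ maxSubgroup X e}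

/-- `I` is an ideal of the semigroup `X`. -/
def IsIdealSet (I : Set X) : Prop := ∀ x ∈ I, ∀ y : X, x * y ∈ I ∧ y * x ∈ I

/-- The set `VE(X)` of viable idempotents: `e` is idempotent and `X ∖ (H_e/e)` is an ideal. -/
def viableIdems : Set X := {e | e ∈ idemSet X ∧ IsIdealSet X (Set.univ \ HeCoideal X e)}

/-- The center `Z(X)`. -/
def centerSet : Set X := {z | ∀ x, z * x = x * z}

/-- `√A = {x : xⁿ ∈ A for some n ≥ 1}`. -/
def sqrtSet (A : Set X) : Set X := {x | ∃ n : ℕ, spow x n ∈ A}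

/-- A subset `B ⊆ X` is bounded: there is `n ≥ 1` with `xⁿ` idempotent for all `x ∈ B`. -/
def BoundedSet (B : Set X) : Prop := ∃ n : ℕ, ∀ x ∈ B, spow x n ∈ idemSet X

/-- The semigroup `X` is bounded. -/
def BoundedSemigroup : Prop := ∃ n : ℕ, ∀ x : X, spow x n ∈ idemSet X

/-- `X` is chain-finite. -/
def ChainFinite : Prop :=
  ∀ I : Set X, I.Infinite → ∃ x ∈ I, ∃ y ∈ I, x * y ≠ x ∧ x * y ≠ y

/-- `G ⊆ X` is a subgroup of the semigroup `X`. -/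
def IsSubgroupSet (G : Set X) : Prop :=
  (∀ x ∈ G, ∀ y ∈ G, x * y ∈ G) ∧
    ∃ e ∈ G, (∀ x ∈ G, x * e = x ∧ e * x = x) ∧ ∀ x ∈ G, ∃ y ∈ G, x * y = e ∧ y * x = e

/-- `X` is group-finite: all its subgroups are finite. -/
def GroupFinite : Prop := ∀ G : Set X, IsSubgroupSet X G → G.Finite

/-- `X` is Clifford+finite: `X ∖ H(X)` is finite. -/
def CliffordPlusFinite : Prop := (Set.univ \ cliffordPart X).Finite

/-- `X` is `E`-commutative: idempotents commute. -/
def ECommutative : Prop := ∀ x ∈ idemSet X, ∀ y ∈ idemSet X, x * y = y * x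

end AlgDefs

/-- The Rees congruence associated with an ideal `I` of `X`. -/
def ReesCon {X : Type*} [Semigroup X] (I : Set X) (hI : IsIdealSet X I) : Con X where
  r x y := x = y ∨ (x ∈ I ∧ y ∈ I)
  iseqv :=
    { refl := fun _ => Or.inl rfl
      symm := by rintro x y (rfl | ⟨h1, h2⟩); exacts [Or.inl rfl, Or.inr ⟨h2, h1⟩]
      trans := by
        rintro x y z (rfl | ⟨h1, h2⟩) (rfl | ⟨h3, h4⟩)
        exacts [Or.inl rfl, Or.inr ⟨h3, h4⟩, Or.inr ⟨h1, h2⟩, Or.inr ⟨h1, h4⟩] }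
  mul' := by
    rintro a b c d (rfl | ⟨h1, h2⟩) (rfl | ⟨h3, h4⟩)
    · exact Or.inl rfl
    · exact Or.inr ⟨(hI c h3 a).2, (hI d h4 a).2⟩
    · exact Or.inr ⟨(hI a h1 c).1, (hI b h2 c).1⟩
    · exact Or.inr ⟨(hI a h1 c).1, (hI b h2 d).1⟩

/-- `X` is ideally `T₂S`-closed: all its Rees quotients are `T₂S`-closed. -/
def IdeallyT2SClosed (X : Type u) [Semigroup X] : Prop :=
  ∀ (I : Set X) (hI : IsIdealSet X I), T2SClosed (ReesCon I hI).Quotient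

/-- `X` is ideally `TzS`-closed. -/
def IdeallyTzSClosed (X : Type u) [Semigroup X] : Prop :=
  ∀ (I : Set X) (hI : IsIdealSet X I), TzSClosed (ReesCon I hI).Quotient

/-- A congruence is a semilattice congruence if its quotient is a commutative
semigroup of idempotents. -/
def IsSemilatticeCon {X : Type*} [Semigroup X] (c : Con X) : Prop :=
  (∀ a b : c.Quotient, a * b = b * a) ∧ ∀ a : c.Quotient, a * a = a

/-- The smallest semilattice congruence `⇕` on `X`, the intersection of all
semilattice congruences. -/
def slCon (X : Type*) [Semigroup X] : Con X := sInf {c | IsSemilatticeCon c}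

theorem centerSet_mul_mem {X : Type*} [Semigroup X] {a b : X}
    (ha : a ∈ centerSet X) (hb : b ∈ centerSet X) : a * b ∈ centerSet X := fun t => by
  rw [mul_assoc, hb t, ← mul_assoc, ha t, mul_assoc]

/-- The ideal center `IZ(X) = {z ∈ Z(X) : zX ⊆ Z(X)}`, as a subsemigroup of `X`. -/
def idealCenter (X : Type*) [Semigroup X] : Subsemigroup X where
  carrier := {z | z ∈ centerSet X ∧ ∀ x : X, z * x ∈ centerSet X}
  mul_mem' := by
    rintro a b ⟨ha, ha'⟩ ⟨hb, hb'⟩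
    refine ⟨centerSet_mul_mem ha hb, fun x => ?_⟩
    have h : a * b * x = a * (b * x) := mul_assoc a b x
    rw [h]
    exact centerSet_mul_mem ha (hb' x)

/-- Evaluation of the semigroup polynomial with coefficients `a, l = [a₁, …, aₙ]`:
`x ↦ a * x * a₁ * x * ⋯ * x * aₙ` (computed in `X¹ = WithOne X`). -/
def polyEval {X : Type*} [Semigroup X] (a : WithOne X) (l : List (WithOne X)) (x : X) :
    WithOne X :=
  l.foldl (fun acc b => acc * (x : WithOne X) * b) a

/-- `f : X → X¹` is a semigroup polynomial of degree `d ≥ 1`. -/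
def IsSemigroupPolynomial {X : Type*} [Semigroup X] (f : X → WithOne X) (d : ℕ) : Prop :=
  1 ≤ d ∧ ∃ (a : WithOne X) (l : List (WithOne X)), l.length = d ∧ ∀ x, f x = polyEval a l x

/-- `X` is polybounded. -/
def Polybounded (X : Type*) [Semigroup X] : Prop :=
  ∃ (k : ℕ) (f : Fin k → X → WithOne X) (d : Fin k → ℕ) (b : Fin k → X),
    (∀ i, IsSemigroupPolynomial (f i) (d i)) ∧ ∀ x : X, ∃ i, f i x = (b i : WithOne X)

/-- `X` is polyfinite. -/
def Polyfinite (X : Type*) [Semigroup X] : Prop :=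
  ∃ (d : ℕ) (F : Set X), F.Finite ∧ ∀ x y : X,
    ∃ (f : X → WithOne X) (m : ℕ), m ≤ d ∧ IsSemigroupPolynomial f m ∧
      (∃ u ∈ F, f x = (u : WithOne X)) ∧ ∃ v ∈ F, f y = (v : WithOne X)

/-- `X` is `B`-centrobounded over `B ⊆ E(X)`: there is `n ≥ 1` such that for every
`e ∈ B` and all `x, y ∈ ⋂_{a ∈ B} H_a/a`, if `w` is the inverse of `y*e` in the group
`H_e` and `(x*e)*w ∈ H_e ∩ Z(X)`, then `((x*e)*w)ⁿ` is an idempotent. -/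
def Centrobounded {X : Type*} [Semigroup X] (B : Set X) : Prop :=
  ∃ n : ℕ, ∀ e ∈ B, ∀ x ∈ ⋂ a ∈ B, HeCoideal X a, ∀ y ∈ ⋂ a ∈ B, HeCoideal X a,
    ∀ w ∈ maxSubgroup X e, (y * e) * w = e → w * (y * e) = e →
      (x * e) * w ∈ maxSubgroup X e → (x * e) * w ∈ centerSet X →
        spow ((x * e) * w) n ∈ idemSet X

/-- `B` is an antichain in the natural partial order `e ≤ f ⇔ ef = fe = e` on idempotents. -/
def IsIdemAntichain {X : Type*} [Semigroup X] (B : Set X) : Prop :=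
  ∀ e ∈ B, ∀ f ∈ B, e ≠ f → ¬(e * f = e ∧ f * e = e) ∧ ¬(e * f = f ∧ f * e = f)
/-! ### Auxiliary development for `statement10` -/

namespace SLAux

open Set TopologicalSpace Function

universe v

/-- Data of a monotone injective chain in a commutative idempotent semigroup,
relative to an abstract order-like relation `R`. -/
structure ChainData (Q : Type v) [Semigroup Q] where
  R : Q → Q → Prop
  a : ℕ → Q
  hrefl : ∀ x : Q, R x x
  htrans : ∀ {x y z : Q}, R x y → R y z → R x z
  hcompat : ∀ {x y : Q} (z : Q), R x y → R (x * z) (y * z)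
  hcomm : ∀ x y : Q, x * y = y * x
  hidem : ∀ x : Q, x * x = x
  hchain : ∀ n m : ℕ, ∃ k, a n * a m = a k
  hdir : ∀ n m : ℕ, ∃ k, R (a n) (a k) ∧ R (a m) (a k)
  hnomax : ¬ ∃ m, ∀ n, R (a n) (a m)

namespace ChainData

variable {Q : Type v} [Semigroup Q] (D : ChainData Q)

def cone (x : Q) : Set Q := {z | D.R z x}

def omg (x : Q) : Set Q := {z | ∃ n, D.R z (D.a n * x)}

def omgInf : Set Q := {z | ∃ n, D.R z (D.a n)}

def star (A B : Set Q) : Set Q := {z | ∃ u ∈ A, ∃ v ∈ B, D.R z (u * v)}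

lemma compat_left (z : Q) {x y : Q} (h : D.R x y) : D.R (z * x) (z * y) := by
  rw [D.hcomm z x, D.hcomm z y]; exact D.hcompat z h

lemma star_mono {A A' B B' : Set Q} (h1 : A ⊆ A') (h2 : B ⊆ B') :
    D.star A B ⊆ D.star A' B' := by
  rintro z ⟨u, hu, v, hv, hz⟩
  exact ⟨u, h1 hu, v, h2 hv, hz⟩

lemma star_comm (A B : Set Q) : D.star A B = D.star B A := by
  ext z
  constructor <;> rintro ⟨u, hu, v, hv, hz⟩ <;>
    exact ⟨v, hv, u, hu, by rwa [D.hcomm]⟩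

lemma star_assoc (A B C : Set Q) : D.star (D.star A B) C = D.star A (D.star B C) := by
  ext z
  constructor
  · rintro ⟨p, ⟨u, hu, v, hv, hp⟩, w, hw, hz⟩
    refine ⟨u, hu, v * w, ⟨v, hv, w, hw, D.hrefl _⟩, ?_⟩
    have h := D.hcompat w hp
    rw [mul_assoc] at h
    exact D.htrans hz h
  · rintro ⟨u, hu, p, ⟨v, hv, w, hw, hp⟩, hz⟩
    refine ⟨u * v, ⟨u, hu, v, hv, D.hrefl _⟩, w, hw, ?_⟩
    have h := D.compat_left u hp
    rw [← mul_assoc] at h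
    exact D.htrans hz h

lemma star_cone_cone (x y : Q) : D.star (D.cone x) (D.cone y) = D.cone (x * y) := by
  ext z
  constructor
  · rintro ⟨u, hu, v, hv, hz⟩
    exact D.htrans hz (D.htrans (D.hcompat v hu) (D.compat_left x hv))
  · intro hz
    exact ⟨x, D.hrefl x, y, D.hrefl y, hz⟩

include D in
private lemma shuffle1 (x b y : Q) : x * (b * y) = b * (x * y) := by
  rw [← mul_assoc, D.hcomm x b, mul_assoc]

lemma star_cone_omg (x y : Q) : D.star (D.cone x) (D.omg y) = D.omg (x * y) := by
  ext z
  constructor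
  · rintro ⟨u, hu, v, ⟨n, hv⟩, hz⟩
    refine ⟨n, ?_⟩
    have h := D.htrans hz (D.htrans (D.hcompat v hu) (D.compat_left x hv))
    rwa [D.shuffle1 x (D.a n) y] at h
  · rintro ⟨n, hz⟩
    refine ⟨x, D.hrefl x, D.a n * y, ⟨n, D.hrefl _⟩, ?_⟩
    rwa [D.shuffle1 x (D.a n) y]

include D in
private lemma shuffle2 (n m : ℕ) (x y : Q) :
    (D.a n * x) * (D.a m * y) = (D.a n * D.a m) * (x * y) := by
  rw [mul_assoc, D.shuffle1 x (D.a m) y, ← mul_assoc, ← mul_assoc]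

lemma star_omg_omg (x y : Q) : D.star (D.omg x) (D.omg y) = D.omg (x * y) := by
  ext z
  constructor
  · rintro ⟨u, ⟨n, hu⟩, v, ⟨m, hv⟩, hz⟩
    obtain ⟨k, hk⟩ := D.hchain n m
    refine ⟨k, ?_⟩
    have h := D.htrans hz (D.htrans (D.hcompat v hu) (D.compat_left (D.a n * x) hv))
    rwa [D.shuffle2 n m x y, hk] at h
  · rintro ⟨k, hz⟩
    refine ⟨D.a k * x, ⟨k, D.hrefl _⟩, D.a k * y, ⟨k, D.hrefl _⟩, ?_⟩
    rwa [D.shuffle2 k k x y, D.hidem (D.a k)]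

lemma star_inf_cone (x : Q) : D.star D.omgInf (D.cone x) = D.omg x := by
  ext z
  constructor
  · rintro ⟨u, ⟨n, hu⟩, v, hv, hz⟩
    exact ⟨n, D.htrans hz (D.htrans (D.hcompat v hu) (D.compat_left (D.a n) hv))⟩
  · rintro ⟨n, hz⟩
    exact ⟨D.a n, ⟨n, D.hrefl _⟩, x, D.hrefl x, hz⟩

lemma star_inf_omg (x : Q) : D.star D.omgInf (D.omg x) = D.omg x := by
  ext z
  constructor
  · rintro ⟨u, ⟨n, hu⟩, v, ⟨m, hv⟩, hz⟩
    obtain ⟨k, hk⟩ := D.hchain n m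
    refine ⟨k, ?_⟩
    have h := D.htrans hz (D.htrans (D.hcompat v hu) (D.compat_left (D.a n) hv))
    rwa [← mul_assoc, hk] at h
  · rintro ⟨n, hz⟩
    refine ⟨D.a n, ⟨n, D.hrefl _⟩, D.a n * x, ⟨n, D.hrefl _⟩, ?_⟩
    rwa [← mul_assoc, D.hidem (D.a n)]

lemma star_inf_inf : D.star D.omgInf D.omgInf = D.omgInf := by
  ext z
  constructor
  · rintro ⟨u, ⟨n, hu⟩, v, ⟨m, hv⟩, hz⟩
    obtain ⟨k, hk⟩ := D.hchain n m
    refine ⟨k, ?_⟩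
    have h := D.htrans hz (D.htrans (D.hcompat v hu) (D.compat_left (D.a n) hv))
    rwa [hk] at h
  · rintro ⟨n, hz⟩
    refine ⟨D.a n, ⟨n, D.hrefl _⟩, D.a n, ⟨n, D.hrefl _⟩, ?_⟩
    rwa [D.hidem (D.a n)]

def P (A : Set Q) : Prop := (∃ x, A = D.cone x) ∨ (∃ x, A = D.omg x) ∨ A = D.omgInf

def Y := {A : Set Q // D.P A}

instance : Mul D.Y :=
  ⟨fun A B => ⟨D.star A.1 B.1, by
    rcases A.2 with ⟨x, hx⟩ | ⟨x, hx⟩ | hx <;> rcases B.2 with ⟨y, hy⟩ | ⟨y, hy⟩ | hy <;>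
      rw [hx, hy]
    · exact Or.inl ⟨x * y, D.star_cone_cone x y⟩
    · exact Or.inr (Or.inl ⟨x * y, D.star_cone_omg x y⟩)
    · exact Or.inr (Or.inl ⟨x, by rw [D.star_comm, D.star_inf_cone]⟩)
    · exact Or.inr (Or.inl ⟨y * x, by rw [D.star_comm, D.star_cone_omg]⟩)
    · exact Or.inr (Or.inl ⟨x * y, D.star_omg_omg x y⟩)
    · exact Or.inr (Or.inl ⟨x, by rw [D.star_comm, D.star_inf_omg]⟩)
    · exact Or.inr (Or.inl ⟨y, D.star_inf_cone y⟩)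
    · exact Or.inr (Or.inl ⟨y, D.star_inf_omg y⟩)
    · exact Or.inr (Or.inr (D.star_inf_inf))⟩⟩

lemma mul_val (A B : D.Y) : (A * B).1 = D.star A.1 B.1 := rfl

instance : Semigroup D.Y :=
  { mul_assoc := fun A B C => Subtype.ext (D.star_assoc A.1 B.1 C.1) }

/-- Every member of `Y` is downward closed w.r.t. `R`. -/
lemma mem_of_R (B : D.Y) {z w : Q} (h : D.R z w) (hw : w ∈ B.1) : z ∈ B.1 := by
  rcases B.2 with ⟨x, hx⟩ | ⟨x, hx⟩ | hx <;> rw [hx] at hw ⊢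
  · exact D.htrans h hw
  · obtain ⟨n, hn⟩ := hw; exact ⟨n, D.htrans h hn⟩
  · obtain ⟨n, hn⟩ := hw; exact ⟨n, D.htrans h hn⟩

def basM (F : Set Q) (A : D.Y) : Set D.Y := {B | F ⊆ B.1 ∧ B.1 ⊆ A.1}

def bas : Set (Set D.Y) := {s | ∃ F A, F.Finite ∧ s = D.basM F A}

instance : TopologicalSpace D.Y := TopologicalSpace.generateFrom D.bas

lemma isBasis : IsTopologicalBasis D.bas := by
  refine ⟨?_, ?_, rfl⟩
  · rintro t₁ ⟨F₁, A₁, hF₁, rfl⟩ t₂ ⟨F₂, A₂, hF₂, rfl⟩ B ⟨⟨hs₁, hb₁⟩, hs₂, hb₂⟩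
    refine ⟨D.basM (F₁ ∪ F₂) B, ⟨F₁ ∪ F₂, B, hF₁.union hF₂, rfl⟩,
      ⟨union_subset hs₁ hs₂, Subset.rfl⟩, ?_⟩
    rintro B' ⟨hF, hB'⟩
    exact ⟨⟨(subset_union_left).trans hF, hB'.trans hb₁⟩,
      (subset_union_right).trans hF, hB'.trans hb₂⟩
  · refine eq_univ_of_forall fun B => ?_
    exact ⟨D.basM ∅ B, ⟨∅, B, finite_empty, rfl⟩, empty_subset _, Subset.rfl⟩

lemma basM_open (F : Set Q) (hF : F.Finite) (A : D.Y) : IsOpen (D.basM F A) :=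
  D.isBasis.isOpen ⟨F, A, hF, rfl⟩

instance : T1Space D.Y := by
  refine t1Space_iff_exists_open.mpr fun A B hAB => ?_
  by_cases h : ∃ x ∈ A.1, x ∉ B.1
  · obtain ⟨x, hxA, hxB⟩ := h
    exact ⟨D.basM {x} A, D.basM_open _ (finite_singleton x) _,
      ⟨singleton_subset_iff.2 hxA, Subset.rfl⟩, fun hB => hxB (hB.1 rfl)⟩
  · push_neg at h
    refine ⟨D.basM ∅ A, D.basM_open _ finite_empty _, ⟨empty_subset _, Subset.rfl⟩,
      fun hB => hAB (Subtype.ext (Subset.antisymm h hB.2))⟩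

lemma basM_closed (F : Set Q) (A : D.Y) : IsClosed (D.basM F A) := by
  rw [← isOpen_compl_iff, isOpen_iff_forall_mem_open]
  intro C hC
  by_cases hFC : F ⊆ C.1
  · have h2 : ¬ C.1 ⊆ A.1 := fun h => hC ⟨hFC, h⟩
    obtain ⟨z, hzC, hzA⟩ := not_subset.mp h2
    refine ⟨D.basM {z} C, ?_, D.basM_open _ (finite_singleton z) _,
      ⟨singleton_subset_iff.2 hzC, Subset.rfl⟩⟩
    rintro B ⟨hz, hBC⟩ hB'
    exact hzA (hB'.2 (hz rfl))
  · obtain ⟨x, hxF, hxC⟩ := not_subset.mp hFC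
    refine ⟨D.basM ∅ C, ?_, D.basM_open _ finite_empty _, ⟨empty_subset _, Subset.rfl⟩⟩
    rintro B ⟨_, hBC⟩ hB'
    exact hxC (hBC (hB'.1 hxF))

lemma hasClopenBasis : HasClopenBasis D.Y :=
  ⟨D.bas, fun s hs => by
    obtain ⟨F, A, hF, rfl⟩ := hs
    exact ⟨D.basM_closed F A, D.basM_open F hF A⟩, D.isBasis⟩

instance : ContinuousMul D.Y := by
  constructor
  rw [continuous_generateFrom_iff]
  rintro s ⟨F, A, hFfin, rfl⟩
  rw [isOpen_prod_iff]
  rintro y₁ y₂ ⟨hF, hsub⟩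
  classical
  have hx : ∀ x : F, ∃ u ∈ y₁.1, ∃ v ∈ y₂.1, D.R (x : Q) (u * v) := fun x => hF x.2
  choose u hu v hv hR using hx
  haveI := hFfin.to_subtype
  refine ⟨D.basM (Set.range u) y₁, D.basM (Set.range v) y₂,
    D.basM_open _ (Set.finite_range u) _, D.basM_open _ (Set.finite_range v) _,
    ⟨?_, Subset.rfl⟩, ⟨?_, Subset.rfl⟩, ?_⟩
  · rintro _ ⟨x, rfl⟩; exact hu x
  · rintro _ ⟨x, rfl⟩; exact hv x
  · rintro ⟨B, C⟩ ⟨⟨hBF, hBsub⟩, hCF, hCsub⟩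
    refine ⟨?_, ?_⟩
    · intro x hxF
      exact ⟨u ⟨x, hxF⟩, hBF ⟨⟨x, hxF⟩, rfl⟩, v ⟨x, hxF⟩, hCF ⟨⟨x, hxF⟩, rfl⟩, hR ⟨x, hxF⟩⟩
    · exact (D.star_mono hBsub hCsub).trans hsub

def coneY (x : Q) : D.Y := ⟨D.cone x, Or.inl ⟨x, rfl⟩⟩

def hom : Q →ₙ* D.Y :=
  ⟨D.coneY, fun x y => Subtype.ext (D.star_cone_cone x y).symm⟩

variable (hanti : ∀ {x y : Q}, D.R x y → D.R y x → x = y)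

include hanti in
lemma hom_injective : Function.Injective D.hom := by
  intro x y h
  have hs : D.cone x = D.cone y := congrArg Subtype.val h
  have h1 : x ∈ D.cone y := by rw [← hs]; exact D.hrefl x
  have h2 : y ∈ D.cone x := by rw [hs]; exact D.hrefl y
  exact hanti h1 h2

lemma basM_singleton (q : Q) : D.basM {q} (D.hom q) = {D.hom q} := by
  ext B
  constructor
  · rintro ⟨h1, h2⟩
    refine Subtype.ext (Subset.antisymm h2 fun z hz => ?_)
    exact D.mem_of_R B hz (h1 rfl)
  · rintro rfl
    exact ⟨singleton_subset_iff.2 (D.hrefl q), Subset.rfl⟩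

lemma range_discrete : DiscreteTopology (Set.range D.hom) := by
  refine discreteTopology_iff_isOpen_singleton.mpr ?_
  rintro ⟨y, q, rfl⟩
  have hopen : IsOpen {D.hom q} := by
    rw [← D.basM_singleton q]
    exact D.basM_open _ (finite_singleton q) _
  have : ({⟨D.hom q, ⟨q, rfl⟩⟩} : Set (Set.range D.hom)) =
      Subtype.val ⁻¹' {D.hom q} := by
    ext B; simp [Subtype.ext_iff]
  rw [this]
  exact hopen.preimage continuous_subtype_val

def omgInfY : D.Y := ⟨D.omgInf, Or.inr (Or.inr rfl)⟩

lemma exists_bound (F : Set Q) (hFin : F.Finite) :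
    F ⊆ D.omgInf → ∃ N, ∀ x ∈ F, D.R x (D.a N) := by
  refine Set.Finite.induction_on
    (motive := fun F _ => F ⊆ D.omgInf → ∃ N, ∀ x ∈ F, D.R x (D.a N)) F hFin
    (fun _ => ⟨0, fun x hx => hx.elim⟩) ?_
  rintro b s hb hs IH hsub
  obtain ⟨nb, hnb⟩ := hsub (mem_insert b s)
  obtain ⟨N₀, hN₀⟩ := IH fun x hx => hsub (mem_insert_of_mem b hx)
  obtain ⟨k, hk1, hk2⟩ := D.hdir nb N₀
  refine ⟨k, ?_⟩
  rintro x (rfl | hx)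
  · exact D.htrans hnb hk1
  · exact D.htrans (hN₀ x hx) hk2

lemma omgInfY_mem_closure : D.omgInfY ∈ closure (Set.range D.hom) := by
  rw [D.isBasis.mem_closure_iff]
  rintro o ⟨F, A, hFfin, rfl⟩ ⟨hF, hsub⟩
  obtain ⟨N, hN⟩ := D.exists_bound F hFfin hF
  refine ⟨D.hom (D.a N), ⟨fun x hx => hN x hx, fun z hz => hsub ⟨N, hz⟩⟩, ⟨D.a N, rfl⟩⟩

lemma omgInfY_not_mem_range : D.omgInfY ∉ Set.range D.hom := by
  rintro ⟨q, hq⟩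
  apply D.hnomax
  have hset : D.cone q = D.omgInf := congrArg Subtype.val hq
  have hq' : q ∈ D.omgInf := by rw [← hset]; exact D.hrefl q
  obtain ⟨m, hm⟩ := hq'
  refine ⟨m, fun n => ?_⟩
  have han : D.a n ∈ D.cone q := by rw [hset]; exact ⟨n, D.hrefl _⟩
  exact D.htrans han hm

include hanti in
theorem not_tzs : ¬ TzSClosed Q := by
  intro H
  have hclosed := H D.Y D.hasClopenBasis D.hom (D.hom_injective hanti) D.range_discrete
  exact D.omgInfY_not_mem_range (hclosed.closure_subset D.omgInfY_mem_closure)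

end ChainData

end SLAux

namespace SLAux

open Set Function

universe v

section Chains

variable {Q : Type v} [Semigroup Q]

lemma mul_trans {x y z : Q} (h1 : x * y = x) (h2 : y * z = y) : x * z = x := by
  calc x * z = (x * y) * z := by rw [h1]
    _ = x * (y * z) := mul_assoc x y z
    _ = x * y := by rw [h2]
    _ = x := h1

lemma mul_compat (hcomm : ∀ x y : Q, x * y = y * x) (hidem : ∀ x : Q, x * x = x)
    {x y : Q} (z : Q) (h : x * y = x) : (x * z) * (y * z) = x * z := by
  calc (x * z) * (y * z) = x * (z * (y * z)) := by rw [mul_assoc]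
    _ = x * ((z * y) * z) := by rw [mul_assoc]
    _ = x * ((y * z) * z) := by rw [hcomm z y]
    _ = x * (y * (z * z)) := by rw [mul_assoc]
    _ = x * (y * z) := by rw [hidem z]
    _ = (x * y) * z := by rw [mul_assoc]
    _ = x * z := by rw [h]

/-- From an infinite chain extract an injective monotone sequence. -/
lemma exists_chain_seq (hcomm : ∀ x y : Q, x * y = y * x)
    (S : Set Q) (hS : S.Infinite) (hidem : ∀ x ∈ S, x * x = x)
    (htot : ∀ a ∈ S, ∀ b ∈ S, a * b = a ∨ a * b = b) :
    ∃ f : ℕ → Q, Function.Injective f ∧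
      ((∀ n m, n ≤ m → f n * f m = f n) ∨ (∀ n m, n ≤ m → f n * f m = f m)) := by
  classical
  let e := hS.natEmbedding
  let g : ℕ → Q := fun n => (e n : Q)
  have hg_mem : ∀ n, g n ∈ S := fun n => (e n).2
  have hg_inj : Function.Injective g := fun n m h => e.injective (Subtype.ext h)
  by_cases hP : {i : ℕ | ∀ j, i < j → g j * g i = g j}.Infinite
  · -- infinitely many peaks : decreasing subsequence
    set p : ℕ → Prop := fun i => ∀ j, i < j → g j * g i = g j with hp
    have hP' : (setOf p).Infinite := hP
    refine ⟨g ∘ Nat.nth p, hg_inj.comp (Nat.nth_injective hP'), Or.inr ?_⟩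
    intro n m hnm
    rcases eq_or_lt_of_le hnm with rfl | hlt
    · exact hidem _ (hg_mem _)
    · have hpk : p (Nat.nth p n) := Nat.nth_mem_of_infinite hP' n
      have := hpk (Nat.nth p m) ((Nat.nth_strictMono hP') hlt)
      simpa [Function.comp, hcomm (g (Nat.nth p n)) (g (Nat.nth p m))] using this
  · -- finitely many peaks : increasing subsequence
    have hfin : {i : ℕ | ∀ j, i < j → g j * g i = g j}.Finite := not_infinite.mp hP
    obtain ⟨N₀, hN₀⟩ := hfin.bddAbove
    have hstep : ∀ i, N₀ < i → ∃ j, i < j ∧ g i * g j = g i := by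
      intro i hi
      have hnp : ¬ ∀ j, i < j → g j * g i = g j := by
        intro hpk
        exact absurd (hN₀ hpk) (not_le.mpr hi)
      push_neg at hnp
      obtain ⟨j, hij, hne⟩ := hnp
      refine ⟨j, hij, ?_⟩
      rcases htot _ (hg_mem i) _ (hg_mem j) with h | h
      · exact h
      · exact absurd (by rw [hcomm]; exact h) hne
    let F : ℕ → {i : ℕ // N₀ < i} := fun n =>
      Nat.rec ⟨N₀ + 1, Nat.lt_succ_self _⟩
        (fun _ q => ⟨Classical.choose (hstep q.1 q.2),
          lt_trans q.2 (Classical.choose_spec (hstep q.1 q.2)).1⟩) n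
    have hFlt : ∀ n, (F n).1 < (F (n + 1)).1 :=
      fun n => (Classical.choose_spec (hstep (F n).1 (F n).2)).1
    have hFmul : ∀ n, g (F n).1 * g (F (n + 1)).1 = g (F n).1 :=
      fun n => (Classical.choose_spec (hstep (F n).1 (F n).2)).2
    have hFs : StrictMono fun n => (F n).1 := strictMono_nat_of_lt_succ hFlt
    refine ⟨fun n => g (F n).1, hg_inj.comp hFs.injective, Or.inl ?_⟩
    intro n m hnm
    refine Nat.le_induction (hidem _ (hg_mem _)) (fun m _ IH => ?_) m hnm
    exact mul_trans IH (hFmul m)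

/-- A commutative idempotent semigroup with an infinite chain is not `TzS`-closed. -/
lemma not_tzs_of_chain {Q : Type v} [Semigroup Q] (hcomm : ∀ x y : Q, x * y = y * x)
    (hidem : ∀ x : Q, x * x = x) (S : Set Q) (hS : S.Infinite)
    (htot : ∀ a ∈ S, ∀ b ∈ S, a * b = a ∨ a * b = b) : ¬ TzSClosed Q := by
  obtain ⟨f, hfinj, hcase⟩ := exists_chain_seq hcomm S hS (fun x _ => hidem x) htot
  rcases hcase with hinc | hdec
  · refine ChainData.not_tzs
      { R := fun x y => x * y = x
        a := f
        hrefl := hidem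
        htrans := fun h1 h2 => mul_trans h1 h2
        hcompat := fun z h => mul_compat hcomm hidem z h
        hcomm := hcomm
        hidem := hidem
        hchain := fun n m => ?_
        hdir := fun n m => ⟨max n m, hinc n _ (le_max_left n m), hinc m _ (le_max_right n m)⟩
        hnomax := ?_ } ?_
    · rcases le_total n m with h | h
      · exact ⟨n, hinc n m h⟩
      · exact ⟨m, by rw [hcomm]; exact hinc m n h⟩
    · rintro ⟨m, hm⟩
      have h1 : f (m + 1) * f m = f (m + 1) := hm (m + 1)
      have h2 : f m * f (m + 1) = f m := hinc m (m + 1) (Nat.le_succ m)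
      have : f m = f (m + 1) := by rw [← h2, hcomm, h1]
      exact Nat.succ_ne_self m (hfinj this.symm)
    · intro x y h1 h2
      rw [← h1, hcomm, h2]
  · refine ChainData.not_tzs
      { R := fun x y => y * x = y
        a := f
        hrefl := hidem
        htrans := fun h1 h2 => mul_trans h2 h1
        hcompat := fun z h => mul_compat hcomm hidem z h
        hcomm := hcomm
        hidem := hidem
        hchain := fun n m => ?_
        hdir := fun n m => ⟨max n m, ?_, ?_⟩
        hnomax := ?_ } ?_
    · rcases le_total n m with h | h
      · exact ⟨m, hdec n m h⟩
      · exact ⟨n, by rw [hcomm]; exact hdec m n h⟩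
    · show f (max n m) * f n = f (max n m)
      rw [hcomm]; exact hdec n _ (le_max_left n m)
    · show f (max n m) * f m = f (max n m)
      rw [hcomm]; exact hdec m _ (le_max_right n m)
    · rintro ⟨m, hm⟩
      have h1 : f m * f (m + 1) = f m := hm (m + 1)
      have h2 : f m * f (m + 1) = f (m + 1) := hdec m (m + 1) (Nat.le_succ m)
      have h3 : f m = f (m + 1) := h1.symm.trans h2
      exact Nat.succ_ne_self m (hfinj h3).symm
    · intro x y h1 h2
      rw [← h2, hcomm, h1]

end Chains

section Viable

variable {X : Type v} [Semigroup X]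

lemma maxSubgroup_mul {f u v : X} (hu : u ∈ maxSubgroup X f) (hv : v ∈ maxSubgroup X f) :
    u * v ∈ maxSubgroup X f := by
  obtain ⟨hu1, hu2, u', hu'1, hu'2, huu', hu'u⟩ := hu
  obtain ⟨hv1, hv2, v', hv'1, hv'2, hvv', hv'v⟩ := hv
  refine ⟨by rw [mul_assoc, hv1], by rw [← mul_assoc, hu2], v' * u',
    by rw [mul_assoc, hu'1], by rw [← mul_assoc, hv'2], ?_, ?_⟩
  · calc (u * v) * (v' * u') = u * ((v * v') * u') := by rw [mul_assoc, ← mul_assoc v v' u']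
      _ = u * (f * u') := by rw [hvv']
      _ = u * u' := by rw [hu'2]
      _ = f := huu'
  · calc (v' * u') * (u * v) = v' * ((u' * u) * v) := by rw [mul_assoc, ← mul_assoc u' u v]
      _ = v' * (f * v) := by rw [hu'u]
      _ = v' * v := by rw [hv2]
      _ = f := hv'v

lemma idem_eq_of_mem_maxSubgroup {f x : X} (hx : x ∈ maxSubgroup X f) (hxx : x * x = x) :
    x = f := by
  obtain ⟨h1, _, y, _, _, hxy, _⟩ := hx
  calc x = x * f := h1.symm
    _ = x * (x * y) := by rw [hxy]
    _ = (x * x) * y := by rw [mul_assoc]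
    _ = x * y := by rw [hxx]
    _ = f := hxy

lemma self_mem_maxSubgroup {f : X} (hf : f * f = f) : f ∈ maxSubgroup X f :=
  ⟨hf, hf, f, hf, hf, hf, hf⟩

lemma self_mem_coideal {f : X} (hf : f * f = f) : f ∈ HeCoideal X f :=
  ⟨rfl, by rw [hf]; exact self_mem_maxSubgroup hf⟩

lemma coideal_mul {f x y : X} (hx : x ∈ HeCoideal X f) (hy : y ∈ HeCoideal X f) :
    x * y ∈ HeCoideal X f := by
  obtain ⟨hxc, hxm⟩ := hx
  obtain ⟨hyc, hym⟩ := hy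
  have hyff : f * (y * f) = y * f := hym.2.1
  constructor
  · calc (x * y) * f = x * (y * f) := by rw [mul_assoc]
      _ = x * (f * y) := by rw [hyc]
      _ = (x * f) * y := by rw [mul_assoc]
      _ = (f * x) * y := by rw [hxc]
      _ = f * (x * y) := by rw [mul_assoc]
  · have h : (x * y) * f = (x * f) * (y * f) := by
      calc (x * y) * f = x * (y * f) := by rw [mul_assoc]
        _ = x * (f * (y * f)) := by rw [hyff]
        _ = (x * f) * (y * f) := by rw [mul_assoc]
    rw [h]
    exact maxSubgroup_mul hxm hym

lemma mem_coideal_mul_iff {f : X} (hf : f ∈ viableIdems X) (x y : X) :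
    x * y ∈ HeCoideal X f ↔ (x ∈ HeCoideal X f ∧ y ∈ HeCoideal X f) := by
  constructor
  · intro h
    by_cases hx : x ∈ HeCoideal X f
    · by_cases hy : y ∈ HeCoideal X f
      · exact ⟨hx, hy⟩
      · exact absurd h ((hf.2 y ⟨trivial, hy⟩ x).2).2
    · exact absurd h ((hf.2 x ⟨trivial, hx⟩ y).1).2
  · rintro ⟨hx, hy⟩
    exact coideal_mul hx hy

/-- The congruence determined by membership in `H_f/f` for a viable idempotent `f`. -/
def coIdealCon (f : X) (hf : f ∈ viableIdems X) : Con X where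
  r x y := (x ∈ HeCoideal X f ↔ y ∈ HeCoideal X f)
  iseqv := ⟨fun _ => Iff.rfl, Iff.symm, Iff.trans⟩
  mul' {w x y z} h1 h2 := by
    have h1' : w ∈ HeCoideal X f ↔ x ∈ HeCoideal X f := h1
    have h2' : y ∈ HeCoideal X f ↔ z ∈ HeCoideal X f := h2
    show (w * y ∈ HeCoideal X f ↔ x * z ∈ HeCoideal X f)
    rw [mem_coideal_mul_iff hf, mem_coideal_mul_iff hf, h1', h2']

lemma coIdealCon_semilattice (f : X) (hf : f ∈ viableIdems X) :
    IsSemilatticeCon (coIdealCon f hf) := by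
  constructor
  · intro p q
    refine Con.induction_on₂ p q fun x y => ?_
    rw [← Con.coe_mul, ← Con.coe_mul, Con.eq]
    show (x * y ∈ HeCoideal X f ↔ y * x ∈ HeCoideal X f)
    rw [mem_coideal_mul_iff hf, mem_coideal_mul_iff hf]
    exact and_comm
  · intro p
    refine Con.induction_on p fun x => ?_
    rw [← Con.coe_mul, Con.eq]
    show (x * x ∈ HeCoideal X f ↔ x ∈ HeCoideal X f)
    rw [mem_coideal_mul_iff hf]
    exact and_self_iff

lemma not_slCon_of_comparable {e f : X} (he : e ∈ viableIdems X) (hf : f ∈ viableIdems X)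
    (hef : e * f = e) (_hfe : f * e = e) (hne : e ≠ f) : ¬ (slCon X) e f := by
  intro h
  have hle : slCon X ≤ coIdealCon f hf := sInf_le (coIdealCon_semilattice f hf)
  have h2 : e ∈ HeCoideal X f ↔ f ∈ HeCoideal X f := hle h
  have hfH : f ∈ HeCoideal X f := self_mem_coideal hf.1
  have heH : e ∈ HeCoideal X f := h2.mpr hfH
  have hm : e * f ∈ maxSubgroup X f := heH.2
  rw [hef] at hm
  exact hne (idem_eq_of_mem_maxSubgroup hm he.1)

end Viable

section Quot

variable (X : Type v) [Semigroup X]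

lemma slCon_of_forall {x y : X} (h : ∀ c : Con X, IsSemilatticeCon c → c x y) :
    slCon X x y := fun c hc => h c hc

lemma slQuot_comm (a b : (slCon X).Quotient) : a * b = b * a := by
  refine Con.induction_on₂ a b fun x y => ?_
  rw [← Con.coe_mul, ← Con.coe_mul, Con.eq]
  refine slCon_of_forall X fun c hc => ?_
  rw [← Con.eq, Con.coe_mul, Con.coe_mul]
  exact hc.1 _ _

lemma slQuot_idem (a : (slCon X).Quotient) : a * a = a := by
  refine Con.induction_on a fun x => ?_
  rw [← Con.coe_mul, Con.eq]
  refine slCon_of_forall X fun c hc => ?_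
  rw [← Con.eq, Con.coe_mul]
  exact hc.2 _

end Quot

end SLAux


theorem statement10 (X : Type u) [Semigroup X] (hX : ProjectivelyTzSClosed X) :
    (∀ S : Set (slCon X).Quotient, S.Infinite →
        ∃ a ∈ S, ∃ b ∈ S, a * b ≠ a ∧ b * a ≠ b) ∧
    (∀ S : Set X, S ⊆ viableIdems X → S.Infinite →
        ∃ a ∈ S, ∃ b ∈ S, ¬(a * b = a ∧ b * a = a) ∧ ¬(b * a = b ∧ a * b = b)) := by
  classical
  have part1 : ∀ S : Set (slCon X).Quotient, S.Infinite →
      ∃ a ∈ S, ∃ b ∈ S, a * b ≠ a ∧ b * a ≠ b := by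
    intro S hS
    by_contra hcon
    push_neg at hcon
    have htot : ∀ a ∈ S, ∀ b ∈ S, a * b = a ∨ a * b = b := by
      intro a ha b hb
      by_cases h : a * b = a
      · exact Or.inl h
      · exact Or.inr ((SLAux.slQuot_comm X a b).trans (hcon a ha b hb h))
    exact SLAux.not_tzs_of_chain (SLAux.slQuot_comm X) (SLAux.slQuot_idem X) S hS htot
      (hX (slCon X))
  refine ⟨part1, ?_⟩
  intro S hsub hS
  by_contra hcon
  push_neg at hcon
  have hcomp : ∀ a ∈ S, ∀ b ∈ S, (a * b = a ∧ b * a = a) ∨ (b * a = b ∧ a * b = b) := by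
    intro a ha b hb
    by_cases h1 : a * b = a
    · by_cases h2 : b * a = a
      · exact Or.inl ⟨h1, h2⟩
      · exact Or.inr (hcon a ha b hb fun _ => h2)
    · exact Or.inr (hcon a ha b hb fun h => absurd h h1)
  have hinjOn : Set.InjOn (fun x : X => (x : (slCon X).Quotient)) S := by
    intro a ha b hb hab
    by_contra hne
    rcases hcomp a ha b hb with ⟨h1, h2⟩ | ⟨h1, h2⟩
    · exact SLAux.not_slCon_of_comparable (hsub ha) (hsub hb) h1 h2 hne ((Con.eq (slCon X)).mp hab)
    · exact SLAux.not_slCon_of_comparable (hsub hb) (hsub ha) h1 h2 (Ne.symm hne)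
        ((slCon X).symm ((Con.eq (slCon X)).mp hab))
  have himg := (Set.infinite_image_iff hinjOn).mpr hS
  obtain ⟨α, hα, β, hβ, hne1, hne2⟩ := part1 _ himg
  obtain ⟨a, haS, rfl⟩ := hα
  obtain ⟨b, hbS, rfl⟩ := hβ
  have hab : a ≠ b := by
    rintro rfl
    exact hne1 (SLAux.slQuot_idem X _)
  rcases hcomp a haS b hbS with ⟨h1, _⟩ | ⟨h1, _⟩
  · refine hne1 ?_
    show ((a : (slCon X).Quotient)) * (b : (slCon X).Quotient) = (a : (slCon X).Quotient)
    rw [← Con.coe_mul, h1]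
  · refine hne2 ?_
    show ((b : (slCon X).Quotient)) * (a : (slCon X).Quotient) = (b : (slCon X).Quotient)
    rw [← Con.coe_mul, h1]
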